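/- Let P ∈ Sp(1,1) with substantial right eigenvalues λ₁, λ₂. Then exactly one of the following holds: (i) λ₁ = λ₂ = ±1; (ii) {λ₁, λ₂} = {1, -1}; (iii) {λ₁, λ₂} = {r, 1/r} for some real r ∉ {-1, 0, 1}; (iv) one of λ₁, λ₂ is ±1 and the other is e^{iθ} with θ ∈ (0,π); (v) λ₁ = λ₂ = e^{iθ} with θ ∈ (0,π); (vi) λ₁ = e^{iθ₁}, λ₂ = e^{iθ₂} with distinct θ₁, θ₂ ∈ (0,π); (vii) λ₁ = r e^{iθ}, λ₂ = (1/r) e^{iθ} for some r > 0, r ≠ 1, and θ ∈ (0,π). -/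

import Mathlib

noncomputable section
open Matrix Polynomial

abbrev Hq := Quaternion ℝ

def toH (z : ℂ) : Hq := ⟨z.re, z.im, 0, 0⟩

def toC1 (q : Hq) : ℂ := ⟨q.re, q.imI⟩
def toC2 (q : Hq) : ℂ := ⟨q.imJ, q.imK⟩

def chi {m : ℕ} (P : Matrix (Fin m) (Fin m) Hq) :
    Matrix (Fin m ⊕ Fin m) (Fin m ⊕ Fin m) ℂ :=
  Matrix.fromBlocks (P.map toC1) (P.map toC2)
    (-(P.map fun q => star (toC2 q))) (P.map fun q => star (toC1 q))

def Jmat : Matrix (Fin 2) (Fin 2) Hq := !![1, 0; 0, -1]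

/-- `P ∈ Sp(1,1)` iff `Pᴴ J P = J`. -/
def InSp (P : Matrix (Fin 2) (Fin 2) Hq) : Prop := Pᴴ * Jmat * P = Jmat

/-- The signature (1,1) Hermitian form `⟨X, Y⟩ = Xᴴ J Y` on ℍ². -/
def herm (X Y : Fin 2 → Hq) : Hq := star (X 0) * Y 0 - star (X 1) * Y 1







lemma toC1_mul (a b : Hq) : toC1 (a*b) = toC1 a * toC1 b - toC2 a * star (toC2 b) := by
  apply Complex.ext <;>
  simp [toC1, toC2, Complex.mul_re, Complex.mul_im, Quaternion.re_mul, Quaternion.imI_mul,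
    Quaternion.imJ_mul, Quaternion.imK_mul] <;> ring

lemma toC2_mul (a b : Hq) : toC2 (a*b) = toC1 a * toC2 b + toC2 a * star (toC1 b) := by
  apply Complex.ext <;>
  simp [toC1, toC2, Complex.mul_re, Complex.mul_im, Quaternion.re_mul, Quaternion.imI_mul,
    Quaternion.imJ_mul, Quaternion.imK_mul] <;> ring

lemma toC1_star (a : Hq) : toC1 (star a) = star (toC1 a) := by
  apply Complex.ext <;> simp [toC1, Complex.ext_iff]

lemma toC2_star (a : Hq) : toC2 (star a) = - toC2 a := by
  apply Complex.ext <;> simp [toC2, Complex.ext_iff]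

lemma toC1_sum {ι : Type*} (s : Finset ι) (f : ι → Hq) :
    toC1 (∑ i ∈ s, f i) = ∑ i ∈ s, toC1 (f i) := by
  classical
  induction s using Finset.induction with
  | empty => apply Complex.ext <;> simp [toC1, Quaternion.re_zero, Quaternion.imI_zero]
  | insert _ _ h ih =>
      rw [Finset.sum_insert h, Finset.sum_insert h, ← ih]
      apply Complex.ext <;> simp [toC1]

lemma toC2_sum {ι : Type*} (s : Finset ι) (f : ι → Hq) :
    toC2 (∑ i ∈ s, f i) = ∑ i ∈ s, toC2 (f i) := by
  classical
  induction s using Finset.induction with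
  | empty => apply Complex.ext <;> simp [toC2, Quaternion.imJ_zero, Quaternion.imK_zero]
  | insert _ _ h ih =>
      rw [Finset.sum_insert h, Finset.sum_insert h, ← ih]
      apply Complex.ext <;> simp [toC2]

lemma chi_mul {m : ℕ} (P Q : Matrix (Fin m) (Fin m) Hq) : chi (P * Q) = chi P * chi Q := by
  unfold chi
  rw [fromBlocks_multiply]
  have e1 : (P*Q).map toC1 = P.map toC1 * Q.map toC1 + P.map toC2 * -Q.map fun q => star (toC2 q) := by
    ext i j
    simp only [Matrix.map_apply, Matrix.mul_apply, Matrix.add_apply, Matrix.neg_apply,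
      toC1_sum, toC1_mul, mul_neg]
    rw [← Finset.sum_neg_distrib, ← Finset.sum_add_distrib]
    exact Finset.sum_congr rfl fun k _ => by ring
  have e2 : (P*Q).map toC2 = P.map toC1 * Q.map toC2 + P.map toC2 * Q.map fun q => star (toC1 q) := by
    ext i j
    simp only [Matrix.map_apply, Matrix.mul_apply, Matrix.add_apply,
      toC2_sum, toC2_mul, ← Finset.sum_add_distrib]
  have e3 : (-(P*Q).map fun q => star (toC2 q)) =
      (-P.map fun q => star (toC2 q)) * Q.map toC1 + (P.map fun q => star (toC1 q)) * -Q.map fun q => star (toC2 q) := by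
    ext i j
    simp only [Matrix.map_apply, Matrix.mul_apply, Matrix.add_apply, Matrix.neg_apply,
      toC2_sum, toC2_mul, mul_neg, neg_mul]
    simp only [star_sum, star_add, star_mul', star_star, neg_add,
      Finset.sum_add_distrib, Finset.sum_neg_distrib]
    abel
  have e4 : ((P*Q).map fun q => star (toC1 q)) =
      (-P.map fun q => star (toC2 q)) * Q.map toC2 + (P.map fun q => star (toC1 q)) * Q.map fun q => star (toC1 q) := by
    ext i j
    simp only [Matrix.map_apply, Matrix.mul_apply, Matrix.add_apply, Matrix.neg_apply,
      toC1_sum, toC1_mul, neg_mul]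
    simp only [star_sum, star_sub, star_mul', star_star]
    rw [← Finset.sum_neg_distrib, ← Finset.sum_add_distrib]
    exact Finset.sum_congr rfl fun k _ => by ring
  rw [e1, e2, e3, e4]

lemma chi_conjTranspose {m : ℕ} (P : Matrix (Fin m) (Fin m) Hq) : chi Pᴴ = (chi P)ᴴ := by
  unfold chi
  rw [fromBlocks_conjTranspose]
  ext (i|i) (j|j) <;>
    simp [Matrix.fromBlocks_apply₁₁, Matrix.fromBlocks_apply₁₂, Matrix.fromBlocks_apply₂₁,
      Matrix.fromBlocks_apply₂₂, Matrix.map_apply, Matrix.conjTranspose_apply,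
      toC1_star, toC2_star]




def Dmat : Matrix (Fin 2) (Fin 2) ℂ := !![1, 0; 0, -1]

lemma chi_Jmat : chi Jmat = fromBlocks Dmat 0 0 Dmat := by
  unfold chi Jmat Dmat
  congr 1 <;> ext i j <;> fin_cases i <;> fin_cases j <;>
    simp [toC1, toC2, Matrix.map_apply, Complex.ext_iff, Quaternion.ext_iff, Quaternion.re_zero,
      Quaternion.imI_zero, Quaternion.imJ_zero, Quaternion.imK_zero, Quaternion.re_one,
      Quaternion.imI_one, Quaternion.imJ_one, Quaternion.imK_one]

lemma Dmat_mul_Dmat : Dmat * Dmat = 1 := by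
  unfold Dmat
  ext i j
  fin_cases i <;> fin_cases j <;> simp [Matrix.mul_apply, Fin.sum_univ_two, Matrix.one_apply]

lemma chiJ_mul_chiJ : chi Jmat * chi Jmat = 1 := by
  rw [chi_Jmat, fromBlocks_multiply]
  simp only [Matrix.mul_zero, Matrix.zero_mul, add_zero, zero_add, Dmat_mul_Dmat]
  exact fromBlocks_one

lemma det_chiJ : (chi Jmat).det = 1 := by
  rw [chi_Jmat, det_fromBlocks_zero₂₁, Dmat]
  simp [Matrix.det_fin_two_of]

/-- Bridge: evaluation of the characteristic polynomial. -/
lemma eval_charpoly' {n : Type*} [Fintype n] [DecidableEq n] (A : Matrix n n ℂ) (μ : ℂ) :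
    A.charpoly.eval μ = (μ • (1 : Matrix n n ℂ) - A).det := by
  rw [Matrix.charpoly, ← Polynomial.coe_evalRingHom, RingHom.map_det]
  congr 1
  ext i j
  by_cases h : i = j
  · subst h; simp [Matrix.charmatrix_apply_eq, Matrix.one_apply]
  · simp [Matrix.charmatrix_apply_ne _ _ _ h, Matrix.one_apply, h]

lemma det_sub_eq (A : Matrix (Fin 2 ⊕ Fin 2) (Fin 2 ⊕ Fin 2) ℂ) (c : ℂ) :
    (A - c • 1).det = (c • 1 - A).det := by
  rw [show A - c • 1 = -(c • 1 - A) from (neg_sub _ _).symm, Matrix.det_neg]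
  norm_num

lemma inv_star_root {A H : Matrix (Fin 2 ⊕ Fin 2) (Fin 2 ⊕ Fin 2) ℂ}
    (hH : H * H = 1) (hAH : Aᴴ * H * A = H) {lam : ℂ} (hne : lam ≠ 0)
    (hroot : (lam • (1 : Matrix (Fin 2 ⊕ Fin 2) (Fin 2 ⊕ Fin 2) ℂ) - A).det = 0) :
    (((starRingEnd ℂ) lam)⁻¹ • (1 : Matrix (Fin 2 ⊕ Fin 2) (Fin 2 ⊕ Fin 2) ℂ) - A).det = 0 := by
  rw [← det_sub_eq] at hroot ⊢
  obtain ⟨v, hv0, hv⟩ := Matrix.exists_mulVec_eq_zero_iff.mpr hroot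
  have hAv : A.mulVec v = lam • v := by
    have := hv
    rwa [Matrix.sub_mulVec, Matrix.smul_mulVec, Matrix.one_mulVec, sub_eq_zero] at this
  set w := H.mulVec v with hw
  have hwne : w ≠ 0 := by
    intro h
    apply hv0
    have : (H * H).mulVec v = H.mulVec w := by rw [← Matrix.mulVec_mulVec]
    rw [hH, Matrix.one_mulVec, h, Matrix.mulVec_zero] at this
    exact this
  have hkey : Aᴴ.mulVec w = lam⁻¹ • w := by
    have h1 : (Aᴴ * H * A).mulVec v = H.mulVec v := by rw [hAH]
    have h2 : (Aᴴ * H * A).mulVec v = Aᴴ.mulVec (H.mulVec (A.mulVec v)) := by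
      rw [Matrix.mulVec_mulVec, Matrix.mulVec_mulVec, Matrix.mul_assoc]
    rw [h2, hAv, Matrix.mulVec_smul, Matrix.mulVec_smul] at h1
    rw [← hw] at h1
    have h3 := congrArg (fun x => lam⁻¹ • x) h1
    simpa [smul_smul, inv_mul_cancel₀ hne] using h3
  have hdet : (Aᴴ - lam⁻¹ • 1).det = 0 := by
    apply Matrix.exists_mulVec_eq_zero_iff.mp
    refine ⟨w, hwne, ?_⟩
    rw [Matrix.sub_mulVec, Matrix.smul_mulVec, Matrix.one_mulVec, hkey, sub_self]
  have hct : Aᴴ - lam⁻¹ • 1 = (A - (starRingEnd ℂ) lam⁻¹ • 1)ᴴ := by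
    rw [Matrix.conjTranspose_sub, Matrix.conjTranspose_smul, Matrix.conjTranspose_one]
    simp
  rw [hct, Matrix.det_conjTranspose] at hdet
  have : (A - (starRingEnd ℂ) lam⁻¹ • 1).det = 0 := by
    have := congrArg star hdet
    simpa using this
  rw [map_inv₀] at this
  exact this


def props (l1 l2 : ℂ) : Fin 7 → Prop :=
      ![ (l1 = l2 ∧ (l1 = 1 ∨ l1 = -1)),
          ((l1 = 1 ∧ l2 = -1) ∨ (l1 = -1 ∧ l2 = 1)),
          (∃ r : ℝ, r ≠ -1 ∧ r ≠ 0 ∧ r ≠ 1 ∧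
            ((l1 = (r : ℂ) ∧ l2 = (r : ℂ)⁻¹) ∨ (l1 = (r : ℂ)⁻¹ ∧ l2 = (r : ℂ)))),
          (∃ θ : ℝ, θ ∈ Set.Ioo 0 Real.pi ∧
            (((l1 = 1 ∨ l1 = -1) ∧ l2 = Complex.exp (θ * Complex.I)) ∨
             ((l2 = 1 ∨ l2 = -1) ∧ l1 = Complex.exp (θ * Complex.I)))),
          (∃ θ : ℝ, θ ∈ Set.Ioo 0 Real.pi ∧
            l1 = Complex.exp (θ * Complex.I) ∧ l2 = Complex.exp (θ * Complex.I)),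
          (∃ θ₁ θ₂ : ℝ, θ₁ ∈ Set.Ioo 0 Real.pi ∧ θ₂ ∈ Set.Ioo 0 Real.pi ∧ θ₁ ≠ θ₂ ∧
            l1 = Complex.exp (θ₁ * Complex.I) ∧ l2 = Complex.exp (θ₂ * Complex.I)),
          (∃ r θ : ℝ, 0 < r ∧ r ≠ 1 ∧ θ ∈ Set.Ioo 0 Real.pi ∧
            ((l1 = r * Complex.exp (θ * Complex.I) ∧
              l2 = (r : ℂ)⁻¹ * Complex.exp (θ * Complex.I)) ∨
             (l1 = (r : ℂ)⁻¹ * Complex.exp (θ * Complex.I) ∧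
              l2 = r * Complex.exp (θ * Complex.I)))) ]



lemma expi_im {θ : ℝ} (hθ : θ ∈ Set.Ioo 0 Real.pi) : 0 < (Complex.exp (θ * Complex.I)).im := by
  rw [Complex.exp_ofReal_mul_I_im]
  exact Real.sin_pos_of_pos_of_lt_pi hθ.1 hθ.2

lemma rexpi_im {r θ : ℝ} (hr : 0 < r) (hθ : θ ∈ Set.Ioo 0 Real.pi) :
    0 < ((r : ℂ) * Complex.exp (θ * Complex.I)).im := by
  rw [Complex.mul_im]
  simp only [Complex.ofReal_re, Complex.ofReal_im, zero_mul, add_zero]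
  exact mul_pos hr (expi_im hθ)

lemma rinvexpi_im {r θ : ℝ} (hr : 0 < r) (hθ : θ ∈ Set.Ioo 0 Real.pi) :
    0 < ((r : ℂ)⁻¹ * Complex.exp (θ * Complex.I)).im := by
  rw [← Complex.ofReal_inv]
  exact rexpi_im (by positivity) hθ

lemma abs_expi (θ : ℝ) : ‖Complex.exp (θ * Complex.I)‖ = 1 :=
  Complex.norm_exp_ofReal_mul_I θ

lemma abs_rexpi {r : ℝ} (hr : 0 < r) (θ : ℝ) :
    ‖(r : ℂ) * Complex.exp (θ * Complex.I)‖ = r := by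
  rw [norm_mul, abs_expi, Complex.norm_real, Real.norm_eq_abs, abs_of_pos hr, mul_one]

lemma abs_rinvexpi {r : ℝ} (hr : 0 < r) (θ : ℝ) :
    ‖(r : ℂ)⁻¹ * Complex.exp (θ * Complex.I)‖ = r⁻¹ := by
  rw [← Complex.ofReal_inv]
  exact abs_rexpi (by positivity) θ

lemma expi_inj {θ1 θ2 : ℝ} (h1 : θ1 ∈ Set.Ioo 0 Real.pi) (h2 : θ2 ∈ Set.Ioo 0 Real.pi)
    (h : Complex.exp (θ1 * Complex.I) = Complex.exp (θ2 * Complex.I)) : θ1 = θ2 := by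
  have := congrArg Complex.re h
  rw [Complex.exp_ofReal_mul_I_re, Complex.exp_ofReal_mul_I_re] at this
  exact Real.injOn_cos ⟨h1.1.le, h1.2.le⟩ ⟨h2.1.le, h2.2.le⟩ this

lemma arg_mem_Ioo {z : ℂ} (hz : 0 < z.im) : z.arg ∈ Set.Ioo 0 Real.pi := by
  have hz0 : z ≠ 0 := fun h => by simp [h] at hz
  have hs : 0 < Real.sin z.arg := by
    rw [Complex.sin_arg]
    exact div_pos hz (norm_pos_iff.mpr hz0)
  constructor
  · by_contra h
    push_neg at h
    have hlb : -Real.pi < z.arg := (Complex.arg_mem_Ioc z).1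
    have : Real.sin z.arg ≤ 0 := Real.sin_nonpos_of_nonpos_of_neg_pi_le h hlb.le
    linarith
  · rcases lt_or_eq_of_le (Complex.arg_le_pi z) with h | h
    · exact h
    · rw [h] at hs; simp at hs

lemma one_lemma {z : ℂ} (hz : 0 < z.im) (h1 : ‖z‖ = 1) :
    z = Complex.exp (z.arg * Complex.I) := by
  conv_lhs => rw [← Complex.norm_mul_exp_arg_mul_I z]
  rw [h1]
  simp

open scoped Classical in
def catf (l1 l2 : ℂ) : Fin 7 :=
  if 0 < l1.im then
    (if 0 < l2.im then
      (if ‖l1‖ = 1 ∧ ‖l2‖ = 1 then (if l1 = l2 then 4 else 5) else 6)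
     else 3)
  else
    (if 0 < l2.im then 3 else (if l1 = l2 then 0 else (if l1 = -l2 then 1 else 2)))

lemma cat0 {l1 l2 : ℂ} (h : props l1 l2 0) : catf l1 l2 = 0 := by
  obtain ⟨heq, hpm⟩ := h
  have h1 : ¬ 0 < l1.im := by rcases hpm with h | h <;> simp [h]
  have h2 : ¬ 0 < l2.im := heq ▸ h1
  simp [catf, h1, h2, heq]

lemma cat1 {l1 l2 : ℂ} (h : props l1 l2 1) : catf l1 l2 = 1 := by
  rcases h with ⟨ha, hb⟩ | ⟨ha, hb⟩ <;> subst ha <;> subst hb <;>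
    norm_num [catf, Complex.ext_iff]

lemma cat2 {l1 l2 : ℂ} (h : props l1 l2 2) : catf l1 l2 = 2 := by
  obtain ⟨r, hm1, h0, h1, hc⟩ := h
  have hne : ((r : ℂ) : ℂ) ≠ ((r : ℂ))⁻¹ := by
    rw [← Complex.ofReal_inv, Ne, Complex.ofReal_inj]
    intro h
    have : r * r = 1 := by field_simp at h; nlinarith [h]
    rcases mul_self_eq_one_iff.mp this with h' | h' <;> [exact h1 h'; exact hm1 h']
  have hne' : ((r : ℂ) : ℂ) ≠ -((r : ℂ))⁻¹ := by
    rw [← Complex.ofReal_inv, ← Complex.ofReal_neg, Ne, Complex.ofReal_inj]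
    intro h
    have hrr : r * r = -1 := by
      field_simp at h
      nlinarith [h]
    nlinarith [mul_self_nonneg r]
  rcases hc with ⟨ha, hb⟩ | ⟨ha, hb⟩ <;> subst ha <;> subst hb
  · have i1 : ¬ 0 < ((r : ℂ)).im := by simp
    have i2 : ¬ 0 < ((r : ℂ)⁻¹).im := by rw [← Complex.ofReal_inv]; simp
    simp [catf, i1, i2, hne, hne']
  · have i1 : ¬ 0 < ((r : ℂ)⁻¹).im := by rw [← Complex.ofReal_inv]; simp
    have i2 : ¬ 0 < ((r : ℂ)).im := by simp
    have hne2 : ((r : ℂ))⁻¹ ≠ (r : ℂ) := fun h => hne h.symm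
    have hne2' : ((r : ℂ))⁻¹ ≠ -(r : ℂ) := by
      rw [← Complex.ofReal_inv, ← Complex.ofReal_neg, Ne, Complex.ofReal_inj]
      intro h
      have hrr : r * r = -1 := by
        have h0' : r ≠ 0 := h0
        field_simp at h
        nlinarith [h]
      nlinarith [mul_self_nonneg r]
    simp [catf, i1, i2, hne2, hne2']

lemma cat3 {l1 l2 : ℂ} (h : props l1 l2 3) : catf l1 l2 = 3 := by
  obtain ⟨θ, hθ, hc⟩ := h
  rcases hc with ⟨hpm, he⟩ | ⟨hpm, he⟩
  · have h1 : ¬ 0 < l1.im := by rcases hpm with h | h <;> simp [h]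
    have h2 : 0 < l2.im := he ▸ expi_im hθ
    simp [catf, h1, h2]
  · have h2 : ¬ 0 < l2.im := by rcases hpm with h | h <;> simp [h]
    have h1 : 0 < l1.im := he ▸ expi_im hθ
    simp [catf, h1, h2]

lemma cat4 {l1 l2 : ℂ} (h : props l1 l2 4) : catf l1 l2 = 4 := by
  obtain ⟨θ, hθ, ha, hb⟩ := h
  have h1 : 0 < l1.im := ha ▸ expi_im hθ
  have h2 : 0 < l2.im := hb ▸ expi_im hθ
  have a1 : ‖l1‖ = 1 := ha ▸ abs_expi θ
  have a2 : ‖l2‖ = 1 := hb ▸ abs_expi θ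
  have heq : l1 = l2 := ha.trans hb.symm
  simp [catf, h1, h2, a1, a2, heq]

lemma cat5 {l1 l2 : ℂ} (h : props l1 l2 5) : catf l1 l2 = 5 := by
  obtain ⟨θ1, θ2, hθ1, hθ2, hne, ha, hb⟩ := h
  have h1 : 0 < l1.im := ha ▸ expi_im hθ1
  have h2 : 0 < l2.im := hb ▸ expi_im hθ2
  have a1 : ‖l1‖ = 1 := ha ▸ abs_expi θ1
  have a2 : ‖l2‖ = 1 := hb ▸ abs_expi θ2
  have heq : l1 ≠ l2 := by
    intro h
    exact hne (expi_inj hθ1 hθ2 ((ha.symm.trans h).trans hb))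
  simp [catf, h1, h2, a1, a2, heq]

lemma cat6 {l1 l2 : ℂ} (h : props l1 l2 6) : catf l1 l2 = 6 := by
  obtain ⟨r, θ, hr, hrne, hθ, hc⟩ := h
  have hinv : r⁻¹ ≠ 1 := fun h => hrne (by field_simp at h; simp [h])
  rcases hc with ⟨ha, hb⟩ | ⟨ha, hb⟩
  · have h1 : 0 < l1.im := ha ▸ rexpi_im hr hθ
    have h2 : 0 < l2.im := hb ▸ rinvexpi_im hr hθ
    have a1 : ‖l1‖ ≠ 1 := by rw [ha, abs_rexpi hr]; exact hrne
    simp [catf, h1, h2, a1]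
  · have h1 : 0 < l1.im := ha ▸ rinvexpi_im hr hθ
    have h2 : 0 < l2.im := hb ▸ rexpi_im hr hθ
    have a1 : ‖l1‖ ≠ 1 := by rw [ha, abs_rinvexpi hr]; exact hinv
    simp [catf, h1, h2, a1]

lemma props_cat {l1 l2 : ℂ} : ∀ i : Fin 7, props l1 l2 i → catf l1 l2 = i := by
  intro i
  fin_cases i
  · exact cat0
  · exact cat1
  · exact cat2
  · exact cat3
  · exact cat4
  · exact cat5
  · exact cat6

lemma real_of_im_eq_zero {z : ℂ} (h : z.im = 0) : z = (z.re : ℂ) :=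
  Complex.ext (by simp) (by simp [h])

lemma pm_one_of_inv_self {z : ℂ} (hz : z ≠ 0) (h : z⁻¹ = z) : z = 1 ∨ z = -1 := by
  have : z * z = 1 := by
    have := congrArg (fun w => z * w) h
    simpa [mul_inv_cancel₀ hz] using this.symm
  exact mul_self_eq_one_iff.mp this

lemma classify (l1 l2 : ℂ)
    (h1 : l1.im = 0 ∨ 0 < l1.im) (h2 : l2.im = 0 ∨ 0 < l2.im)
    (habs : ‖l1‖ * ‖l2‖ = 1)
    (hm1 : l1⁻¹ = l1 ∨ l1⁻¹ = (starRingEnd ℂ) l1 ∨ l1⁻¹ = l2 ∨ l1⁻¹ = (starRingEnd ℂ) l2)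
    (hm2 : l2⁻¹ = l1 ∨ l2⁻¹ = (starRingEnd ℂ) l1 ∨ l2⁻¹ = l2 ∨ l2⁻¹ = (starRingEnd ℂ) l2) :
    ∃! n : Fin 7, props l1 l2 n := by
  have hl1ne : l1 ≠ 0 := by
    intro h; rw [h] at habs; simp at habs
  have hl2ne : l2 ≠ 0 := by
    intro h; rw [h] at habs; simp at habs
  suffices hex : ∃ n, props l1 l2 n by
    obtain ⟨n, hn⟩ := hex
    exact ⟨n, hn, fun y hy => (props_cat y hy).symm.trans (props_cat n hn)⟩
  rcases h1 with h1 | h1 <;> rcases h2 with h2 | h2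
  · -- both real
    have e1 : l1 = (l1.re : ℂ) := real_of_im_eq_zero h1
    have e2 : l2 = (l2.re : ℂ) := real_of_im_eq_zero h2
    set a := l1.re with ha'
    set b := l2.re with hb'
    have ha0 : a ≠ 0 := fun h => hl1ne (by rw [e1, h]; simp)
    by_cases hpm : a = 1 ∨ a = -1
    · have habs1 : ‖l1‖ = 1 := by
        rw [e1, Complex.norm_real, Real.norm_eq_abs]
        rcases hpm with h | h <;> rw [h] <;> norm_num
      have habs2 : ‖l2‖ = 1 := by
        rw [habs1, one_mul] at habs; exact habs
      have hb : b = 1 ∨ b = -1 := by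
        have : |b| = 1 := by rw [e2, Complex.norm_real, Real.norm_eq_abs] at habs2; exact habs2
        rcases abs_eq (by norm_num : (0:ℝ) ≤ 1) |>.mp this with h | h
        · exact Or.inl h
        · exact Or.inr h
      have el1 : l1 = 1 ∨ l1 = -1 := by
        rcases hpm with h | h
        · exact Or.inl (by rw [e1, h]; norm_num)
        · exact Or.inr (by rw [e1, h]; norm_num)
      have el2 : l2 = 1 ∨ l2 = -1 := by
        rcases hb with h | h
        · exact Or.inl (by rw [e2, h]; norm_num)
        · exact Or.inr (by rw [e2, h]; norm_num)
      by_cases heq : l1 = l2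
      · exact ⟨0, heq, el1⟩
      · refine ⟨1, ?_⟩
        rcases el1 with k1 | k1 <;> rcases el2 with k2 | k2
        · exact absurd (k1.trans k2.symm) heq
        · exact Or.inl ⟨k1, k2⟩
        · exact Or.inr ⟨k1, k2⟩
        · exact absurd (k1.trans k2.symm) heq
    · push_neg at hpm
      have hinv : l1⁻¹ = l2 := by
        have hc1 : (starRingEnd ℂ) l1 = l1 := Complex.conj_eq_iff_im.mpr h1
        have hc2 : (starRingEnd ℂ) l2 = l2 := Complex.conj_eq_iff_im.mpr h2
        rcases hm1 with h | h | h | h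
        · rcases pm_one_of_inv_self hl1ne h with k | k
          · exact absurd (by rw [e1] at k; exact_mod_cast k) hpm.1
          · exact absurd (by rw [e1] at k; exact_mod_cast k) hpm.2
        · rw [hc1] at h
          rcases pm_one_of_inv_self hl1ne h with k | k
          · exact absurd (by rw [e1] at k; exact_mod_cast k) hpm.1
          · exact absurd (by rw [e1] at k; exact_mod_cast k) hpm.2
        · exact h
        · rw [hc2] at h; exact h
      refine ⟨2, a, hpm.2, ha0, hpm.1, Or.inl ⟨e1, ?_⟩⟩
      rw [← hinv, e1]
  · -- l1 real, l2 strictly upper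
    have e1 : l1 = (l1.re : ℂ) := real_of_im_eq_zero h1
    have hiim : (l1⁻¹).im = 0 := by
      rw [Complex.inv_im, h1]; simp
    have hpm : l1 = 1 ∨ l1 = -1 := by
      have hc1 : (starRingEnd ℂ) l1 = l1 := Complex.conj_eq_iff_im.mpr h1
      rcases hm1 with h | h | h | h
      · exact pm_one_of_inv_self hl1ne h
      · rw [hc1] at h; exact pm_one_of_inv_self hl1ne h
      · exfalso; rw [h] at hiim; exact absurd hiim (ne_of_gt h2)
      · exfalso; rw [h] at hiim
        have : (starRingEnd ℂ l2).im = -l2.im := Complex.conj_im l2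
        rw [this] at hiim; linarith
    have habs1 : ‖l1‖ = 1 := by
      rcases hpm with h | h <;> rw [h] <;> norm_num
    have habs2 : ‖l2‖ = 1 := by rw [habs1, one_mul] at habs; exact habs
    exact ⟨3, l2.arg, arg_mem_Ioo h2, Or.inl ⟨hpm, one_lemma h2 habs2⟩⟩
  · -- l2 real, l1 strictly upper
    have hiim : (l2⁻¹).im = 0 := by
      rw [Complex.inv_im, h2]; simp
    have hpm : l2 = 1 ∨ l2 = -1 := by
      have hc2 : (starRingEnd ℂ) l2 = l2 := Complex.conj_eq_iff_im.mpr h2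
      rcases hm2 with h | h | h | h
      · exfalso; rw [h] at hiim; exact absurd hiim (ne_of_gt h1)
      · exfalso; rw [h] at hiim
        have : (starRingEnd ℂ l1).im = -l1.im := Complex.conj_im l1
        rw [this] at hiim; linarith
      · exact pm_one_of_inv_self hl2ne h
      · rw [hc2] at h; exact pm_one_of_inv_self hl2ne h
    have habs2 : ‖l2‖ = 1 := by
      rcases hpm with h | h <;> rw [h] <;> norm_num
    have habs1 : ‖l1‖ = 1 := by rw [habs2, mul_one] at habs; exact habs
    exact ⟨3, l1.arg, arg_mem_Ioo h1, Or.inr ⟨hpm, one_lemma h1 habs1⟩⟩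
  · -- both strictly upper
    by_cases habs1 : ‖l1‖ = 1
    · have habs2 : ‖l2‖ = 1 := by rw [habs1, one_mul] at habs; exact habs
      have e1 : l1 = Complex.exp (l1.arg * Complex.I) := one_lemma h1 habs1
      have e2 : l2 = Complex.exp (l2.arg * Complex.I) := one_lemma h2 habs2
      by_cases heq : l1 = l2
      · exact ⟨4, l1.arg, arg_mem_Ioo h1, e1, heq ▸ e1⟩
      · refine ⟨5, l1.arg, l2.arg, arg_mem_Ioo h1, arg_mem_Ioo h2, ?_, e1, e2⟩
        intro h
        exact heq (by rw [e1, e2, h])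
    · have hneg : (l1⁻¹).im < 0 := by
        rw [Complex.inv_im]
        have : 0 < Complex.normSq l1 := Complex.normSq_pos.mpr hl1ne
        exact div_neg_of_neg_of_pos (neg_neg_of_pos h1) this
      have hmc : l1⁻¹ = (starRingEnd ℂ) l2 := by
        rcases hm1 with h | h | h | h
        · exfalso; rw [h] at hneg; linarith
        · exfalso
          have : l1 * (starRingEnd ℂ) l1 = 1 := by
            rw [← h, mul_inv_cancel₀ hl1ne]
          rw [Complex.mul_conj] at this
          have h2' : Complex.normSq l1 = 1 := by exact_mod_cast this
          have : ‖l1‖ = 1 := by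
            rw [← Complex.sq_norm] at h2'
            nlinarith [norm_nonneg l1]
          exact habs1 this
        · exfalso; rw [h] at hneg; linarith
        · exact h
      have hl2 : l2 = ((starRingEnd ℂ) l1)⁻¹ := by
        have := congrArg (starRingEnd ℂ) hmc
        rw [Complex.conj_conj, map_inv₀] at this
        exact this.symm
      set r := ‖l1‖ with hr'
      have hr : 0 < r := norm_pos_iff.mpr hl1ne
      obtain ⟨θ, hθmem, e1⟩ :
          ∃ θ, θ ∈ Set.Ioo 0 Real.pi ∧ l1 = (r : ℂ) * Complex.exp (θ * Complex.I) :=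
        ⟨l1.arg, arg_mem_Ioo h1, (Complex.norm_mul_exp_arg_mul_I l1).symm⟩
      have e2 : l2 = ((r : ℂ))⁻¹ * Complex.exp (θ * Complex.I) := by
        rw [hl2, e1]
        rw [_root_.map_mul, Complex.conj_ofReal]
        have hce : (starRingEnd ℂ) (Complex.exp (θ * Complex.I)) =
            (Complex.exp (θ * Complex.I))⁻¹ := by
          rw [← Complex.exp_conj, ← Complex.exp_neg]
          congr 1
          simp [Complex.conj_I, mul_comm]
        rw [hce, mul_inv, inv_inv]
      exact ⟨6, r, θ, hr, habs1, hθmem, Or.inl ⟨e1, e2⟩⟩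

lemma mul_self_eq_one_nonneg {s : ℝ} (hs : 0 ≤ s) (h : s * s = 1) : s = 1 := by
  rcases mul_self_eq_one_iff.mp h with h' | h' <;> linarith

/-- Classification of the pair of substantial right eigenvalues of `P ∈ Sp(1,1)`:
exactly one of the seven listed possibilities holds. -/
theorem sp_substantial_classification (P : Matrix (Fin 2) (Fin 2) Hq)
    (hP : InSp P) (l1 l2 : ℂ)
    (h1 : l1.im = 0 ∨ 0 < l1.im) (h2 : l2.im = 0 ∨ 0 < l2.im)
    (hchar : (chi P).charpoly =
      (X - C l1) * (X - C (starRingEnd ℂ l1)) * (X - C l2) * (X - C (starRingEnd ℂ l2))) :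
    ∃! n : Fin 7,
      (![ (l1 = l2 ∧ (l1 = 1 ∨ l1 = -1)),
          ((l1 = 1 ∧ l2 = -1) ∨ (l1 = -1 ∧ l2 = 1)),
          (∃ r : ℝ, r ≠ -1 ∧ r ≠ 0 ∧ r ≠ 1 ∧
            ((l1 = (r : ℂ) ∧ l2 = (r : ℂ)⁻¹) ∨ (l1 = (r : ℂ)⁻¹ ∧ l2 = (r : ℂ)))),
          (∃ θ : ℝ, θ ∈ Set.Ioo 0 Real.pi ∧
            (((l1 = 1 ∨ l1 = -1) ∧ l2 = Complex.exp (θ * Complex.I)) ∨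
             ((l2 = 1 ∨ l2 = -1) ∧ l1 = Complex.exp (θ * Complex.I)))),
          (∃ θ : ℝ, θ ∈ Set.Ioo 0 Real.pi ∧
            l1 = Complex.exp (θ * Complex.I) ∧ l2 = Complex.exp (θ * Complex.I)),
          (∃ θ₁ θ₂ : ℝ, θ₁ ∈ Set.Ioo 0 Real.pi ∧ θ₂ ∈ Set.Ioo 0 Real.pi ∧ θ₁ ≠ θ₂ ∧
            l1 = Complex.exp (θ₁ * Complex.I) ∧ l2 = Complex.exp (θ₂ * Complex.I)),
          (∃ r θ : ℝ, 0 < r ∧ r ≠ 1 ∧ θ ∈ Set.Ioo 0 Real.pi ∧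
            ((l1 = r * Complex.exp (θ * Complex.I) ∧
              l2 = (r : ℂ)⁻¹ * Complex.exp (θ * Complex.I)) ∨
             (l1 = (r : ℂ)⁻¹ * Complex.exp (θ * Complex.I) ∧
              l2 = r * Complex.exp (θ * Complex.I)))) ] : Fin 7 → Prop) n := by
  show ∃! n : Fin 7, props l1 l2 n
  set A := chi P with hA
  have hAH : Aᴴ * chi Jmat * A = chi Jmat := by
    have h := congrArg chi hP
    rwa [chi_mul, chi_mul, chi_conjTranspose] at h
  -- determinant facts
  have hdet : (starRingEnd ℂ) A.det * A.det = 1 := by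
    have h := congrArg Matrix.det hAH
    rwa [Matrix.det_mul, Matrix.det_mul, Matrix.det_conjTranspose, det_chiJ, mul_one] at h
  have h0 : A.det =
      ((X - C l1) * (X - C (starRingEnd ℂ l1)) * (X - C l2) *
        (X - C (starRingEnd ℂ l2))).eval 0 := by
    rw [← hchar, eval_charpoly']
    simp [Matrix.det_neg]
    norm_num
  have h0' : A.det = l1 * (starRingEnd ℂ) l1 * (l2 * (starRingEnd ℂ) l2) := by
    rw [h0]
    simp only [Polynomial.eval_mul, Polynomial.eval_sub, Polynomial.eval_X, Polynomial.eval_C]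
    ring
  have habsd : ‖A.det‖ = 1 := by
    have h := congrArg (norm : ℂ → ℝ) hdet
    rw [norm_mul, Complex.norm_conj] at h
    have h1' : ‖A.det‖ * ‖A.det‖ = 1 := by
      rw [h]; norm_num
    exact mul_self_eq_one_nonneg (norm_nonneg _) h1'
  have habs : ‖l1‖ * ‖l2‖ = 1 := by
    have h := congrArg (norm : ℂ → ℝ) h0'
    rw [habsd, norm_mul, norm_mul, norm_mul, Complex.norm_conj,
      Complex.norm_conj] at h
    have h2' : (‖l1‖ * ‖l2‖) * (‖l1‖ * ‖l2‖) = 1 := by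
      linear_combination -h
    exact mul_self_eq_one_nonneg (by positivity) h2'
  have hl1ne : l1 ≠ 0 := by
    intro h; rw [h] at habs; simp at habs
  have hl2ne : l2 ≠ 0 := by
    intro h; rw [h] at habs; simp at habs
  -- root-set description
  have hroots : ∀ μ : ℂ,
      (μ • (1 : Matrix (Fin 2 ⊕ Fin 2) (Fin 2 ⊕ Fin 2) ℂ) - A).det = 0 ↔
      (μ = l1 ∨ μ = (starRingEnd ℂ) l1 ∨ μ = l2 ∨ μ = (starRingEnd ℂ) l2) := by
    intro μ
    rw [← eval_charpoly', hchar]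
    simp only [Polynomial.eval_mul, Polynomial.eval_sub, Polynomial.eval_X, Polynomial.eval_C,
      mul_eq_zero, sub_eq_zero]
    tauto
  have step : ∀ lam : ℂ, lam ≠ 0 →
      (lam = l1 ∨ lam = (starRingEnd ℂ) l1 ∨ lam = l2 ∨ lam = (starRingEnd ℂ) l2) →
      (((starRingEnd ℂ) lam)⁻¹ = l1 ∨ ((starRingEnd ℂ) lam)⁻¹ = (starRingEnd ℂ) l1 ∨
       ((starRingEnd ℂ) lam)⁻¹ = l2 ∨ ((starRingEnd ℂ) lam)⁻¹ = (starRingEnd ℂ) l2) := by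
    intro lam hne hmem
    exact (hroots _).mp (inv_star_root chiJ_mul_chiJ hAH hne ((hroots lam).mpr hmem))
  have conv1 : ∀ x y : ℂ, ((starRingEnd ℂ) x)⁻¹ = y → x⁻¹ = (starRingEnd ℂ) y := by
    intro x y h
    have h' := congrArg (starRingEnd ℂ) h
    rwa [map_inv₀, Complex.conj_conj] at h'
  have hm1 : l1⁻¹ = l1 ∨ l1⁻¹ = (starRingEnd ℂ) l1 ∨ l1⁻¹ = l2 ∨
      l1⁻¹ = (starRingEnd ℂ) l2 := by
    have h := step l1 hl1ne (Or.inl rfl)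
    rcases h with h | h | h | h
    · exact Or.inr (Or.inl (conv1 _ _ h))
    · have := conv1 _ _ h; rw [Complex.conj_conj] at this; exact Or.inl this
    · exact Or.inr (Or.inr (Or.inr (conv1 _ _ h)))
    · have := conv1 _ _ h; rw [Complex.conj_conj] at this
      exact Or.inr (Or.inr (Or.inl this))
  have hm2 : l2⁻¹ = l1 ∨ l2⁻¹ = (starRingEnd ℂ) l1 ∨ l2⁻¹ = l2 ∨
      l2⁻¹ = (starRingEnd ℂ) l2 := by
    have h := step l2 hl2ne (Or.inr (Or.inr (Or.inl rfl)))
    rcases h with h | h | h | h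
    · exact Or.inr (Or.inl (conv1 _ _ h))
    · have := conv1 _ _ h; rw [Complex.conj_conj] at this; exact Or.inl this
    · exact Or.inr (Or.inr (Or.inr (conv1 _ _ h)))
    · have := conv1 _ _ h; rw [Complex.conj_conj] at this
      exact Or.inr (Or.inr (Or.inl this))
  exact classify l1 l2 h1 h2 habs hm1 hm2
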